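/- Let V be a finite-dimensional vector space over the finite field 𝔽_q. The function 𝔑 is log-supermodular on the lattice of subspaces of V: for all subspaces S, T ⊆ V, 𝔑(S) · 𝔑(T) ≤ 𝔑(S ∩ T) · 𝔑(S + T). -/

import Mathlib

/-!
Common setup: `V` is a finite-dimensional vector space over a finite field `F`.
An *atom* is a one-dimensional subspace of `V`.  An *atomic decomposition* of a
subspace `S ⊆ V` is a finite set of atoms whose join (subspace sum) is `S`;
it is *minimal* if no proper subset is an atomic decomposition of `S`.
`NN S` is the number of minimal atomic decompositions of `S`.
-/

variable {F V : Type*} [Field F] [Fintype F] [AddCommGroup V] [Module F V]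
  [FiniteDimensional F V]

/-- `𝔞` is an atomic decomposition of `S`. -/
def IsAtomicDecomp (S : Submodule F V) (𝔞 : Finset (Submodule F V)) : Prop :=
  (∀ A ∈ 𝔞, Module.finrank F A = 1) ∧ 𝔞.sup id = S

/-- `𝔞` is a minimal atomic decomposition of `S`. -/
def IsMinAtomicDecomp (S : Submodule F V) (𝔞 : Finset (Submodule F V)) : Prop :=
  IsAtomicDecomp S 𝔞 ∧ ∀ 𝔟 ⊂ 𝔞, ¬ IsAtomicDecomp S 𝔟

/-- `NN S` is the number `𝔑(S)` of minimal atomic decompositions of `S`. -/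
noncomputable def NN (S : Submodule F V) : ℕ :=
  Set.ncard {𝔞 : Finset (Submodule F V) | IsMinAtomicDecomp S 𝔞}

/-! ### Auxiliary lemmas about one-dimensional submodules -/

lemma aux_span_singleton_eq {A : Submodule F V} (hA : Module.finrank F A = 1) {v : V}
    (hv : v ∈ A) (h0 : v ≠ 0) : Submodule.span F {v} = A :=
  Submodule.eq_of_le_of_finrank_eq
    ((Submodule.span_singleton_le_iff_mem v A).2 hv)
    (by rw [finrank_span_singleton h0, hA])

lemma aux_exists_ne_zero_mem {A : Submodule F V} (hA : Module.finrank F A = 1) :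
    ∃ v : V, v ∈ A ∧ v ≠ 0 := by
  have hbot : A ≠ ⊥ := by
    intro h
    rw [h, finrank_bot] at hA
    simp at hA
  simpa using (Submodule.ne_bot_iff A).1 hbot

lemma aux_span_inj {ι : Type*} {f : ι → V} (hf : LinearIndependent F f) :
    Function.Injective fun i => Submodule.span F {f i} := by
  intro i j hij
  by_contra hne
  have h1 : f i ∉ Submodule.span F (f '' ({j} : Set ι)) :=
    hf.notMem_span_image (by simp [hne])
  apply h1
  dsimp only at hij
  rw [Set.image_singleton, ← hij]
  exact Submodule.mem_span_singleton_self _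

lemma aux_finrank_finsetSup_le (𝔟 : Finset (Submodule F V))
    (h1 : ∀ A ∈ 𝔟, Module.finrank F A = 1) :
    Module.finrank F ↥(𝔟.sup id) ≤ 𝔟.card := by
  classical
  induction 𝔟 using Finset.induction_on with
  | empty => simp
  | @insert A s hA ih =>
    rw [Finset.sup_insert]
    have h2 : Module.finrank F ↥(id A ⊔ s.sup id)
        ≤ Module.finrank F ↥(A : Submodule F V) + Module.finrank F ↥(s.sup id) := by
      have := Submodule.finrank_sup_add_finrank_inf_eq (A : Submodule F V) (s.sup id)
      simp only [id] at this ⊢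
      omega
    have h3 := ih (fun B hB => h1 B (Finset.mem_insert_of_mem hB))
    have h4 := h1 A (Finset.mem_insert_self A s)
    rw [Finset.card_insert_of_notMem hA]
    omega

/-- Every minimal atomic decomposition of `S` has exactly `finrank S` elements. -/
lemma aux_card_of_min {S : Submodule F V} {𝔞 : Finset (Submodule F V)}
    (h : IsMinAtomicDecomp S 𝔞) : 𝔞.card = Module.finrank F S := by
  classical
  haveI : Finite V := Module.finite_of_finite F
  have hchoice : ∀ A : {A // A ∈ 𝔞}, ∃ v : V, v ∈ (A : Submodule F V) ∧ v ≠ 0 :=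
    fun A => aux_exists_ne_zero_mem (h.1.1 A A.2)
  choose u hu hu0 using hchoice
  have hspanu : ∀ A : {A // A ∈ 𝔞}, Submodule.span F {u A} = (A : Submodule F V) :=
    fun A => aux_span_singleton_eq (h.1.1 A A.2) (hu A) (hu0 A)
  have hsubt : (⨆ A : {A // A ∈ 𝔞}, (A : Submodule F V)) = 𝔞.sup id := by
    rw [Finset.sup_eq_iSup, iSup_subtype]
    rfl
  have hrange : Submodule.span F (Set.range u) = S := by
    rw [Submodule.span_range_eq_iSup]
    simp_rw [hspanu]
    rw [hsubt, h.1.2]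
  obtain ⟨t, hts, htspan, htli⟩ := exists_linearIndependent F (Set.range u)
  have htS : Submodule.span F t = S := by rw [htspan, hrange]
  haveI : Fintype t := Fintype.ofFinite t
  set 𝔟 : Finset (Submodule F V) := t.toFinset.image (fun x => Submodule.span F {x}) with h𝔟
  have h𝔟sub : 𝔟 ⊆ 𝔞 := by
    intro B hB
    simp only [h𝔟, Finset.mem_image, Set.mem_toFinset] at hB
    obtain ⟨x, hxt, rfl⟩ := hB
    obtain ⟨A, rfl⟩ := hts hxt
    rw [hspanu]
    exact A.2
  have hspan_t : Submodule.span F t = ⨆ x : t, Submodule.span F {(x : V)} := by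
    conv_lhs => rw [← Subtype.range_coe (s := t)]
    rw [Submodule.span_range_eq_iSup]
  have h𝔟dec : IsAtomicDecomp S 𝔟 := by
    constructor
    · intro B hB
      simp only [h𝔟, Finset.mem_image, Set.mem_toFinset] at hB
      obtain ⟨x, hxt, rfl⟩ := hB
      exact finrank_span_singleton (htli.ne_zero ⟨x, hxt⟩)
    · rw [h𝔟, Finset.sup_image]
      have : ((t.toFinset).sup (id ∘ fun x => Submodule.span F {x}))
          = ⨆ x : t, Submodule.span F {(x : V)} := by
        rw [Finset.sup_eq_iSup]
        simp only [Function.comp, id, Set.mem_toFinset]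
        exact (iSup_subtype'' t fun x => Submodule.span F {x}).symm
      rw [this, ← hspan_t, htS]
  have h𝔟eq : 𝔟 = 𝔞 := by
    by_contra hne
    exact h.2 𝔟 (Finset.ssubset_iff_subset_ne.2 ⟨h𝔟sub, hne⟩) h𝔟dec
  have hinj : Set.InjOn (fun x => Submodule.span F ({x} : Set V)) t.toFinset := by
    intro x hx y hy hxy
    have := aux_span_inj (F := F) htli
      (a₁ := ⟨x, by simpa using hx⟩) (a₂ := ⟨y, by simpa using hy⟩) hxy
    exact congrArg Subtype.val this
  have hc1 : 𝔟.card = t.toFinset.card := Finset.card_image_of_injOn hinj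
  have hc2 : t.toFinset.card = Module.finrank F S := by
    rw [← htS]
    exact (finrank_span_set_eq_card htli).symm
  rw [← h𝔟eq, hc1, hc2]

/-! ### The master counting formula -/

lemma aux_NN_count (S : Submodule F V) :
    (Module.finrank F S).factorial * (Fintype.card F - 1) ^ Module.finrank F S * NN S
      = ∏ i ∈ Finset.range (Module.finrank F S),
          (Fintype.card F ^ Module.finrank F S - Fintype.card F ^ i) := by
  classical
  haveI : Finite V := Module.finite_of_finite F
  haveI : Fintype V := Fintype.ofFinite V
  haveI : Finite (Submodule F V) := Finite.of_injective _ SetLike.coe_injective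
  haveI : Fintype (Submodule F V) := Fintype.ofFinite _
  set d := Module.finrank F S with hd
  set q := Fintype.card F with hq
  -- Step 1: count linearly independent `d`-tuples in `S`.
  have hcount : Nat.card { s : Fin d → ↥S // LinearIndependent F s }
      = ∏ i ∈ Finset.range d, (q ^ d - q ^ i) := by
    rw [card_linearIndependent (K := F) (V := ↥S) le_rfl]
    exact Fin.prod_univ_eq_prod_range (fun i => q ^ d - q ^ i) d
  -- Step 2: the image of an independent tuple is a minimal atomic decomposition.
  have hΦmem : ∀ (s : Fin d → ↥S), LinearIndependent F s →
      IsMinAtomicDecomp S (Finset.image (fun i => Submodule.span F {(s i : V)})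
        Finset.univ) := by
    intro s hs
    have hv : LinearIndependent F (fun i => (s i : V)) := hs.map' S.subtype S.ker_subtype
    have hsup : (Finset.image (fun i => Submodule.span F {(s i : V)}) Finset.univ).sup id
        = S := by
      rw [Finset.sup_image]
      have h1 : (Finset.univ.sup (id ∘ fun i => Submodule.span F {(s i : V)}))
          = ⨆ i, Submodule.span F {(s i : V)} := by
        rw [Finset.sup_eq_iSup]
        simp
      rw [h1, ← Submodule.span_range_eq_iSup]
      apply Submodule.eq_of_le_of_finrank_eq
      · rw [Submodule.span_le]
        rintro x ⟨i, rfl⟩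
        exact (s i).2
      · rw [finrank_span_eq_card hv, Fintype.card_fin]
    refine ⟨⟨?_, hsup⟩, ?_⟩
    · intro B hB
      simp only [Finset.mem_image, Finset.mem_univ, true_and] at hB
      obtain ⟨i, rfl⟩ := hB
      exact finrank_span_singleton (by simpa using hv.ne_zero i)
    · intro 𝔟 hss hdec
      have h2 : Module.finrank F ↥(𝔟.sup id) ≤ 𝔟.card := aux_finrank_finsetSup_le 𝔟 hdec.1
      rw [hdec.2] at h2
      have h3 := Finset.card_lt_card hss
      have h4 : (Finset.image (fun i => Submodule.span F {(s i : V)}) Finset.univ).card ≤ d :=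
        le_trans Finset.card_image_le (by simp)
      omega
  -- Step 3: `NN S` as a `Nat.card`.
  have hNN : NN S = Nat.card {𝔞 : Finset (Submodule F V) // IsMinAtomicDecomp S 𝔞} := rfl
  set Dt := {𝔞 : Finset (Submodule F V) // IsMinAtomicDecomp S 𝔞} with hDt
  let Φ : { s : Fin d → ↥S // LinearIndependent F s } → Dt := fun s => ⟨_, hΦmem s.1 s.2⟩
  -- Step 4: every fiber of `Φ` has cardinality `d! * (q-1)^d`.
  have hfiber : ∀ 𝔄 : Dt, Nat.card {s // Φ s = 𝔄} = d.factorial * (q - 1) ^ d := by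
    rintro ⟨𝔞, h𝔞⟩
    have hcard𝔞 : 𝔞.card = d := aux_card_of_min h𝔞
    have hAle : ∀ A ∈ 𝔞, (A : Submodule F V) ≤ S := fun A hA => by
      rw [← h𝔞.1.2]
      exact Finset.le_sup (f := id) hA
    set Fib : {A // A ∈ 𝔞} → Type _ :=
      fun A => {w : ↥(A : Submodule F V) // (w : V) ≠ 0} with hFibdef
    set Sig := (Σ g : {g : Fin d → {A // A ∈ 𝔞} // Function.Injective g}, ∀ i, Fib (g.1 i))
      with hSigdef
    have hspan : ∀ (p : Sig) (i : Fin d),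
        Submodule.span F {((p.2 i).1 : V)} = ((p.1.1 i : Submodule F V)) :=
      fun p i => aux_span_singleton_eq (h𝔞.1.1 _ (p.1.1 i).2) (p.2 i).1.2 (p.2 i).2
    have himg : ∀ p : Sig,
        Finset.image (fun i => ((p.1.1 i) : Submodule F V)) Finset.univ = 𝔞 := by
      intro p
      apply Finset.eq_of_subset_of_card_le
      · intro B hB
        simp only [Finset.mem_image, Finset.mem_univ, true_and] at hB
        obtain ⟨i, rfl⟩ := hB
        exact (p.1.1 i).2
      · have hinj : Function.Injective (fun i => ((p.1.1 i) : Submodule F V)) :=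
          fun i j hij => p.1.2 (Subtype.ext hij)
        rw [Finset.card_image_of_injective _ hinj, Finset.card_univ, Fintype.card_fin, hcard𝔞]
    have hsup2 : ∀ p : Sig, (⨆ i, ((p.1.1 i) : Submodule F V)) = S := by
      intro p
      conv_rhs => rw [← h𝔞.1.2, ← himg p]
      rw [Finset.sup_image, Finset.sup_eq_iSup]
      simp
    have hmemS : ∀ (p : Sig) (i : Fin d), ((p.2 i).1 : V) ∈ S :=
      fun p i => hAle _ (p.1.1 i).2 (p.2 i).1.2
    have hspanrange : ∀ p : Sig,
        Submodule.span F (Set.range fun i => ((p.2 i).1 : V)) = S := by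
      intro p
      rw [Submodule.span_range_eq_iSup]
      simp_rw [hspan p]
      exact hsup2 p
    have hli : ∀ p : Sig, LinearIndependent F (fun i => ((p.2 i).1 : V)) := by
      intro p
      rw [linearIndependent_iff_card_eq_finrank_span]
      show Fintype.card (Fin d) = Module.finrank F ↥(Submodule.span F _)
      rw [hspanrange p, Fintype.card_fin]
    have hliS : ∀ p : Sig,
        LinearIndependent F (fun i => (⟨((p.2 i).1 : V), hmemS p i⟩ : ↥S)) :=
      fun p => LinearIndependent.of_comp S.subtype (hli p)
    have hΦv : ∀ p : Sig,
        Φ ⟨fun i => ⟨((p.2 i).1 : V), hmemS p i⟩, hliS p⟩ = (⟨𝔞, h𝔞⟩ : Dt) := by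
      intro p
      apply Subtype.ext
      show Finset.image _ Finset.univ = 𝔞
      have he : (fun i => Submodule.span F {((⟨((p.2 i).1 : V), hmemS p i⟩ : ↥S) : V)})
          = fun i => ((p.1.1 i) : Submodule F V) := funext fun i => hspan p i
      rw [he, himg p]
    let f : Sig → {s // Φ s = (⟨𝔞, h𝔞⟩ : Dt)} :=
      fun p => ⟨⟨fun i => ⟨((p.2 i).1 : V), hmemS p i⟩, hliS p⟩, hΦv p⟩
    have hinjf : Function.Injective f := by
      rintro ⟨⟨g, hg⟩, w⟩ ⟨⟨g', hg'⟩, w'⟩ hpp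
      have hv : ∀ i : Fin d, ((w i).1 : V) = ((w' i).1 : V) :=
        fun i => congrArg (fun z : {s // Φ s = (⟨𝔞, h𝔞⟩ : Dt)} => ((z.1.1 i : V))) hpp
      have hgg : g = g' := by
        funext i
        apply Subtype.ext
        rw [← hspan ⟨⟨g, hg⟩, w⟩ i, ← hspan ⟨⟨g', hg'⟩, w'⟩ i]
        simp only
        rw [hv i]
      subst hgg
      have hww : w = w' := funext fun i => Subtype.ext (Subtype.ext (hv i))
      subst hww
      rfl
    have hsurjf : Function.Surjective f := by
      rintro ⟨⟨s, hs⟩, hΦs⟩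
      have hvV : LinearIndependent F (fun i => (s i : V)) := hs.map' S.subtype S.ker_subtype
      have himg2 : Finset.image (fun i => Submodule.span F {(s i : V)}) Finset.univ = 𝔞 :=
        congrArg Subtype.val hΦs
      refine ⟨⟨⟨fun i => ⟨Submodule.span F {(s i : V)}, by
          rw [← himg2]; exact Finset.mem_image_of_mem _ (Finset.mem_univ i)⟩,
          fun i j hij => aux_span_inj hvV (congrArg Subtype.val hij)⟩,
          fun i => ⟨⟨(s i : V), Submodule.mem_span_singleton_self _⟩,
            by simpa using hvV.ne_zero i⟩⟩, ?_⟩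
      exact Subtype.ext (Subtype.ext (funext fun i => Subtype.ext rfl))
    have hbij : Nat.card {s // Φ s = (⟨𝔞, h𝔞⟩ : Dt)} = Nat.card Sig :=
      (Nat.card_eq_of_bijective f ⟨hinjf, hsurjf⟩).symm
    rw [hbij]
    -- the cardinality of each `Fib A` is `q - 1`
    have hFib : ∀ A : {A // A ∈ 𝔞}, Nat.card (Fib A) = q - 1 := by
      intro A
      have h1 : Module.finrank F ↥(A : Submodule F V) = 1 := h𝔞.1.1 A A.2
      have hcA : Fintype.card ↥(A : Submodule F V) = q := by
        rw [Module.card_eq_pow_finrank (K := F) (V := ↥(A : Submodule F V)), h1, pow_one]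
      rw [Nat.card_eq_fintype_card]
      have he : Fintype.card (Fib A) = Fintype.card {w : ↥(A : Submodule F V) // ¬ (w = 0)} :=
        Fintype.card_congr (Equiv.subtypeEquivRight (fun w => by
          simp [ZeroMemClass.coe_eq_zero]))
      rw [he, Fintype.card_subtype_compl, Fintype.card_subtype_eq, hcA]
    -- the cardinality of `Sig`
    rw [Nat.card_eq_fintype_card, Fintype.card_sigma]
    have hterm : ∀ g : {g : Fin d → {A // A ∈ 𝔞} // Function.Injective g},
        Fintype.card (∀ i, Fib (g.1 i)) = (q - 1) ^ d := by
      intro g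
      rw [Fintype.card_pi]
      have hc : ∀ i : Fin d, Fintype.card (Fib (g.1 i)) = q - 1 := fun i => by
        rw [← Nat.card_eq_fintype_card, hFib]
      rw [Finset.prod_congr rfl (fun i _ => hc i), Finset.prod_const, Finset.card_univ,
        Fintype.card_fin]
    rw [Finset.sum_congr rfl (fun g _ => hterm g), Finset.sum_const, Finset.card_univ]
    have hgcard : Fintype.card {g : Fin d → {A // A ∈ 𝔞} // Function.Injective g}
        = d.factorial := by
      rw [Fintype.card_congr (Equiv.subtypeInjectiveEquivEmbedding (Fin d) {A // A ∈ 𝔞}),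
        Fintype.card_embedding_eq, Fintype.card_coe, hcard𝔞, Fintype.card_fin,
        Nat.descFactorial_self]
    rw [hgcard, smul_eq_mul]
  -- Step 5: put everything together.
  have hT : Nat.card { s : Fin d → ↥S // LinearIndependent F s }
      = NN S * (d.factorial * (q - 1) ^ d) := by
    rw [hNN]
    calc Nat.card { s : Fin d → ↥S // LinearIndependent F s }
        = Nat.card (Σ 𝔄 : Dt, {s // Φ s = 𝔄}) := (Nat.card_congr (Equiv.sigmaFiberEquiv Φ)).symm
      _ = ∑ 𝔄 : Dt, Nat.card {s // Φ s = 𝔄} := by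
          rw [Nat.card_eq_fintype_card, Fintype.card_sigma]
          exact Finset.sum_congr rfl fun 𝔄 _ => (Nat.card_eq_fintype_card).symm
      _ = ∑ 𝔄 : Dt, d.factorial * (q - 1) ^ d := Finset.sum_congr rfl fun 𝔄 _ => hfiber 𝔄
      _ = Nat.card Dt * (d.factorial * (q - 1) ^ d) := by
          rw [Finset.sum_const, Finset.card_univ, smul_eq_mul, Nat.card_eq_fintype_card]
  rw [← hcount, hT]
  ring

/-! ### Arithmetic lemmas -/

private def Pprod (q n : ℕ) : ℕ := ∏ i ∈ Finset.range n, (q ^ n - q ^ i)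

lemma aux_Pprod_succ {q : ℕ} (hq : 1 ≤ q) (n : ℕ) :
    Pprod q (n + 1) = (q ^ n * (q ^ (n + 1) - 1)) * Pprod q n := by
  unfold Pprod
  rw [Finset.prod_range_succ']
  have key : ∀ i, q ^ (n + 1) - q ^ (i + 1) = q * (q ^ n - q ^ i) := by
    intro i
    rw [Nat.mul_sub_left_distrib, ← pow_succ', ← pow_succ']
  simp only [key, pow_zero]
  rw [Finset.prod_mul_distrib, Finset.prod_const, Finset.card_range]
  ring

lemma aux_core_step {q a b : ℕ} (hq : 2 ≤ q) (hab : a ≤ b) :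
    (b + 1) * (q ^ a * (q ^ (a + 1) - 1)) ≤ (a + 1) * (q ^ b * (q ^ (b + 1) - 1)) := by
  obtain ⟨k, rfl⟩ := Nat.exists_eq_add_of_le hab
  have hq1 : 1 ≤ q := by omega
  have hk1 : 1 ≤ q ^ k := Nat.one_le_pow _ _ (by omega)
  have hk2 : k + 1 ≤ q ^ k := by
    have := Nat.lt_two_pow_self (n := k)
    have := Nat.pow_le_pow_left hq k
    omega
  have h1 : q ^ k * (q ^ (a + 1) - 1) ≤ q ^ (a + k + 1) - 1 := by
    rw [Nat.mul_sub_left_distrib, mul_one, ← pow_add]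
    have he : k + (a + 1) = a + k + 1 := by omega
    rw [he]
    omega
  calc (a + k + 1) * (q ^ a * (q ^ (a + 1) - 1))
      ≤ ((a + 1) * (q ^ k * q ^ k)) * (q ^ a * (q ^ (a + 1) - 1)) := by
        apply Nat.mul_le_mul_right
        have h5 : k + 1 ≤ q ^ k * q ^ k := le_trans hk2 (Nat.le_mul_of_pos_right _ (by omega))
        calc a + k + 1 ≤ (a + 1) * (k + 1) := by nlinarith
          _ ≤ (a + 1) * (q ^ k * q ^ k) := Nat.mul_le_mul_left _ h5
    _ = (a + 1) * (q ^ a * (q ^ k * (q ^ k * (q ^ (a + 1) - 1)))) := by ring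
    _ ≤ (a + 1) * (q ^ a * (q ^ k * (q ^ (a + k + 1) - 1))) := by gcongr
    _ = (a + 1) * ((q ^ a * q ^ k) * (q ^ (a + k + 1) - 1)) := by ring
    _ = (a + 1) * (q ^ (a + k) * (q ^ (a + k + 1) - 1)) := by rw [← pow_add]

lemma aux_telescope {q : ℕ} (hq : 2 ≤ q) :
    ∀ k a b c D : ℕ, a ≤ b → a = c + k → a + b = c + D →
      Nat.factorial c * Nat.factorial D * (Pprod q a * Pprod q b)
        ≤ Nat.factorial a * Nat.factorial b * (Pprod q c * Pprod q D) := by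
  intro k
  induction k with
  | zero =>
    intro a b c D hab hac hsum
    obtain rfl : a = c := by omega
    obtain rfl : b = D := by omega
    exact le_refl _
  | succ k ih =>
    intro a b c D hab hac hsum
    obtain ⟨a', rfl⟩ : ∃ a', a = a' + 1 := ⟨c + k, by omega⟩
    have step := aux_core_step hq (a := a') (b := b) (by omega)
    have ihh := ih a' (b + 1) c D (by omega) (by omega) (by omega)
    have e1 : Pprod q (a' + 1) = (q ^ a' * (q ^ (a' + 1) - 1)) * Pprod q a' :=
      aux_Pprod_succ (by omega) a'
    have e2 : Pprod q (b + 1) = (q ^ b * (q ^ (b + 1) - 1)) * Pprod q b :=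
      aux_Pprod_succ (by omega) b
    have key : (b + 1) * (Nat.factorial c * Nat.factorial D * (Pprod q (a' + 1) * Pprod q b))
        ≤ (b + 1) * (Nat.factorial (a' + 1) * Nat.factorial b * (Pprod q c * Pprod q D)) := by
      calc (b + 1) * (Nat.factorial c * Nat.factorial D * (Pprod q (a' + 1) * Pprod q b))
          = (Nat.factorial c * Nat.factorial D * (Pprod q a' * Pprod q b))
            * ((b + 1) * (q ^ a' * (q ^ (a' + 1) - 1))) := by rw [e1]; ring
        _ ≤ (Nat.factorial c * Nat.factorial D * (Pprod q a' * Pprod q b))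
            * ((a' + 1) * (q ^ b * (q ^ (b + 1) - 1))) := Nat.mul_le_mul_left _ step
        _ = (a' + 1) * (Nat.factorial c * Nat.factorial D * (Pprod q a' * Pprod q (b + 1))) := by
            rw [e2]; ring
        _ ≤ (a' + 1) * (Nat.factorial a' * Nat.factorial (b + 1) * (Pprod q c * Pprod q D)) :=
            Nat.mul_le_mul_left _ ihh
        _ = (b + 1) * (Nat.factorial (a' + 1) * Nat.factorial b * (Pprod q c * Pprod q D)) := by
            rw [Nat.factorial_succ, Nat.factorial_succ]; ring
    exact Nat.le_of_mul_le_mul_left key (by omega)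

lemma aux_key (S T : Submodule F V) (hST : Module.finrank F S ≤ Module.finrank F T) :
    NN S * NN T ≤ NN (S ⊓ T) * NN (S ⊔ T) := by
  have hq2 : 2 ≤ Fintype.card F := Fintype.one_lt_card
  set q := Fintype.card F with hqdef
  set a := Module.finrank F S with ha
  set b := Module.finrank F T with hb
  set c := Module.finrank F ↥(S ⊓ T) with hc
  set D := Module.finrank F ↥(S ⊔ T) with hD
  have hsum : D + c = a + b := Submodule.finrank_sup_add_finrank_inf_eq S T
  have hca : c ≤ a := Submodule.finrank_mono inf_le_left
  have E1 : a.factorial * (q - 1) ^ a * NN S = Pprod q a := aux_NN_count S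
  have E2 : b.factorial * (q - 1) ^ b * NN T = Pprod q b := aux_NN_count T
  have E3 : c.factorial * (q - 1) ^ c * NN (S ⊓ T) = Pprod q c := aux_NN_count (S ⊓ T)
  have E4 : D.factorial * (q - 1) ^ D * NN (S ⊔ T) = Pprod q D := aux_NN_count (S ⊔ T)
  have htel := aux_telescope hq2 (a - c) a b c D hST (by omega) (by omega)
  have hE : (q - 1) ^ c * (q - 1) ^ D = (q - 1) ^ a * (q - 1) ^ b := by
    rw [← pow_add, ← pow_add]
    congr 1
    omega
  have hpos : 0 < (a.factorial * b.factorial * ((q - 1) ^ a * (q - 1) ^ b))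
      * (c.factorial * D.factorial * ((q - 1) ^ c * (q - 1) ^ D)) := by
    have h1 := Nat.factorial_pos a
    have h2 := Nat.factorial_pos b
    have h3 := Nat.factorial_pos c
    have h4 := Nat.factorial_pos D
    have h5 : 0 < q - 1 := by omega
    positivity
  refine Nat.le_of_mul_le_mul_left ?_ hpos
  calc (a.factorial * b.factorial * ((q - 1) ^ a * (q - 1) ^ b))
        * (c.factorial * D.factorial * ((q - 1) ^ c * (q - 1) ^ D)) * (NN S * NN T)
      = (c.factorial * D.factorial * ((q - 1) ^ c * (q - 1) ^ D))
        * ((a.factorial * (q - 1) ^ a * NN S) * (b.factorial * (q - 1) ^ b * NN T)) := by ring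
    _ = (c.factorial * D.factorial * ((q - 1) ^ c * (q - 1) ^ D))
        * (Pprod q a * Pprod q b) := by rw [E1, E2]
    _ = ((q - 1) ^ c * (q - 1) ^ D)
        * (c.factorial * D.factorial * (Pprod q a * Pprod q b)) := by ring
    _ ≤ ((q - 1) ^ c * (q - 1) ^ D)
        * (a.factorial * b.factorial * (Pprod q c * Pprod q D)) := Nat.mul_le_mul_left _ htel
    _ = ((q - 1) ^ a * (q - 1) ^ b)
        * (a.factorial * b.factorial * (Pprod q c * Pprod q D)) := by rw [hE]
    _ = (a.factorial * b.factorial * ((q - 1) ^ a * (q - 1) ^ b))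
        * (c.factorial * D.factorial * ((q - 1) ^ c * (q - 1) ^ D)) * (NN (S ⊓ T) * NN (S ⊔ T)) := by
        rw [← E3, ← E4]; ring

/-- `𝔑` is log-supermodular on the lattice of subspaces:
`𝔑(S) · 𝔑(T) ≤ 𝔑(S ∩ T) · 𝔑(S + T)`. -/
theorem NN_log_supermodular (S T : Submodule F V) :
    NN S * NN T ≤ NN (S ⊓ T) * NN (S ⊔ T) := by
  rcases le_total (Module.finrank F S) (Module.finrank F T) with h | h
  · exact aux_key S T h
  · rw [inf_comm, sup_comm, mul_comm]
    exact aux_key T S h
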